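/- Let S be a finite Abelian group with |S| ≥ 3, and let Γ₁, Γ₂ be graphs with u₁v₁ ∈ E(Γ₁) and distinct vertices u₂, v₂ ∈ V(Γ₂). If neither Γ₁ nor Γ₂ is S-connected, then the 2-sum Γ = Γ₁(u₁v₁) ⊕ Γ₂(u₂,v₂) is not S-connected. -/

import Mathlib

open Finset

/-- A finite loopless multigraph: each edge `e` has two distinct endpoints
`fst e` and `snd e` (this pair serves as a reference orientation). -/
structure Multigraph (V : Type) (E : Type) where
  fst : E → V
  snd : E → V
  loopless : ∀ e, fst e ≠ snd e

namespace Multigraph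

variable {V E : Type}

/-- The head of edge `e` under the orientation `o` (a Boolean switch per edge). -/
def head (G : Multigraph V E) (o : E → Bool) (e : E) : V :=
  if o e then G.fst e else G.snd e

/-- The tail of edge `e` under the orientation `o`. -/
def tail (G : Multigraph V E) (o : E → Bool) (e : E) : V :=
  if o e then G.snd e else G.fst e

/-- The boundary `∂φ(u)`: sum of `φ` over edges directed out of `u`
minus the sum over edges directed into `u`.  (An edge is directed out of
its tail and into its head.) -/
def boundary [Fintype E] [DecidableEq V] {S : Type} [AddCommGroup S]
    (G : Multigraph V E) (o : E → Bool) (φ : E → S) (u : V) : S :=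
  (∑ e : E, if G.tail o e = u then φ e else 0)
    - ∑ e : E, if G.head o e = u then φ e else 0

/-- `G` is `S`-connected: every zero-sum boundary function is realized by a
nowhere-zero mapping under some orientation. -/
def GroupConnected [Fintype V] [Fintype E] [DecidableEq V]
    (G : Multigraph V E) (S : Type) [AddCommGroup S] : Prop :=
  ∀ β : V → S, ∑ v : V, β v = 0 →
    ∃ (o : E → Bool) (φ : E → S), (∀ e, φ e ≠ 0) ∧ ∀ u, G.boundary o φ u = β u

/-- Degree of a vertex: number of edge-ends at it. -/
def degree [Fintype E] [DecidableEq V] (G : Multigraph V E) (v : V) : ℕ :=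
  (univ.filter fun e => G.fst e = v).card + (univ.filter fun e => G.snd e = v).card

/-- Adjacency via some edge. -/
def Adj (G : Multigraph V E) (u v : V) : Prop :=
  ∃ e, (G.fst e = u ∧ G.snd e = v) ∨ (G.fst e = v ∧ G.snd e = u)

/-- Connectivity of a multigraph. -/
def Connected (G : Multigraph V E) : Prop :=
  Nonempty V ∧ ∀ u v : V, Relation.ReflTransGen G.Adj u v

/-- Delete a set of edges. -/
def deleteEdges (G : Multigraph V E) (F : Set E) : Multigraph V {e : E // e ∉ F} where
  fst e := G.fst e.1
  snd e := G.snd e.1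
  loopless e := G.loopless e.1

/-- `G` has edge-connectivity at least `k`. -/
def EdgeConnAtLeast (G : Multigraph V E) (k : ℕ) : Prop :=
  ∀ F : Finset E, F.card < k → (G.deleteEdges ↑F).Connected

/-- Orientation-free boundary, suitable for groups of exponent 2. -/
def ubnd [Fintype E] [DecidableEq V] {S : Type} [AddCommGroup S]
    (G : Multigraph V E) (φ : E → S) (v : V) : S :=
  ∑ e : E, ((if G.fst e = v then φ e else 0) + (if G.snd e = v then φ e else 0))

/-- The subgraph with vertex set `R` and edge set `F`. -/
def restrict (G : Multigraph V E) (R : Set V) (F : Set E)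
    (hF : ∀ e ∈ F, G.fst e ∈ R ∧ G.snd e ∈ R) : Multigraph R F where
  fst e := ⟨G.fst e.1, (hF e.1 e.2).1⟩
  snd e := ⟨G.snd e.1, (hF e.1 e.2).2⟩
  loopless e h := G.loopless e.1 (congrArg Subtype.val h)

end Multigraph

/-- The identification map used in the 2-sum: `u₂ ↦ u₁ = fst e₀`, `v₂ ↦ v₁ = snd e₀`,
and every other vertex of `Γ₂` maps to itself. -/
def glue {V₁ E₁ V₂ : Type} [DecidableEq V₂] (Γ₁ : Multigraph V₁ E₁) (e₀ : E₁)
    (u₂ v₂ : V₂) (w : V₂) : V₁ ⊕ {w : V₂ // w ≠ u₂ ∧ w ≠ v₂} :=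
  if h : w = u₂ then Sum.inl (Γ₁.fst e₀)
  else if h' : w = v₂ then Sum.inl (Γ₁.snd e₀)
  else Sum.inr ⟨w, h, h'⟩

theorem glue_injective {V₁ E₁ V₂ : Type} [DecidableEq V₂] (Γ₁ : Multigraph V₁ E₁)
    (e₀ : E₁) (u₂ v₂ : V₂) (huv : u₂ ≠ v₂) :
    Function.Injective (glue Γ₁ e₀ u₂ v₂) := by
  intro w w' h
  unfold glue at h
  split_ifs at h <;> simp_all
  · exact absurd h (Γ₁.loopless e₀)
  · exact absurd h.symm (Γ₁.loopless e₀)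

/-- The 2-sum `Γ₁(e₀) ⊕ Γ₂(u₂, v₂)`: delete the edge `e₀` (with ends `u₁ = fst e₀`,
`v₁ = snd e₀`) from `Γ₁`, and identify `u₁` with `u₂` and `v₁` with `v₂`. -/
def Multigraph.twoSum {V₁ E₁ V₂ E₂ : Type} [DecidableEq E₁] [DecidableEq V₂]
    (Γ₁ : Multigraph V₁ E₁) (e₀ : E₁) (Γ₂ : Multigraph V₂ E₂)
    (u₂ v₂ : V₂) (huv : u₂ ≠ v₂) :
    Multigraph (V₁ ⊕ {w : V₂ // w ≠ u₂ ∧ w ≠ v₂}) ({e : E₁ // e ≠ e₀} ⊕ E₂) where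
  fst := Sum.elim (fun e => Sum.inl (Γ₁.fst e.1)) (fun e => glue Γ₁ e₀ u₂ v₂ (Γ₂.fst e))
  snd := Sum.elim (fun e => Sum.inl (Γ₁.snd e.1)) (fun e => glue Γ₁ e₀ u₂ v₂ (Γ₂.snd e))
  loopless := by
    rintro (e | e) h
    · simp only [Sum.elim_inl, Sum.inl.injEq] at h
      exact Γ₁.loopless e.1 h
    · exact Γ₂.loopless e (glue_injective Γ₁ e₀ u₂ v₂ huv h)


section TwoSumAux

open Finset

variable {S : Type} [AddCommGroup S]

private lemma sum_boundary_aux {E V : Type} [Fintype E] [Fintype V] [DecidableEq V]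
    (f : E → V) (φ : E → S) :
    ∑ v, ∑ e, (if f e = v then φ e else 0) = ∑ e, φ e := by
  rw [Finset.sum_comm]
  refine Finset.sum_congr rfl fun e _ => ?_
  simp [Finset.sum_ite_eq]

lemma Multigraph.sum_boundary {V E : Type} [Fintype V] [Fintype E] [DecidableEq V]
    (G : Multigraph V E) (o : E → Bool) (φ : E → S) :
    ∑ v, G.boundary o φ v = 0 := by
  unfold Multigraph.boundary
  rw [Finset.sum_sub_distrib, sum_boundary_aux, sum_boundary_aux, sub_self]

private lemma sum_subtype_ne_ne {V : Type} [Fintype V] [DecidableEq V]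
    {u v : V} (huv : u ≠ v) (g : V → S) :
    ∑ w : {w : V // w ≠ u ∧ w ≠ v}, g w.1 = ∑ w, g w - g u - g v := by
  have h1 : ∑ w ∈ univ.filter (fun w => w ≠ u ∧ w ≠ v), g w
      = ∑ w : {w : V // w ≠ u ∧ w ≠ v}, g w.1 :=
    Finset.sum_subtype _ (by simp) g
  have h2 : univ.filter (fun w => ¬(w ≠ u ∧ w ≠ v)) = {u, v} := by
    ext w; simp [not_and_or, not_not]; tauto
  have h3 := Finset.sum_filter_add_sum_filter_not univ (fun w => w ≠ u ∧ w ≠ v) g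
  rw [h2, Finset.sum_pair huv] at h3
  rw [← h1, ← h3]; abel

private lemma sum_split_e0 {E : Type} [Fintype E] [DecidableEq E] (e₀ : E) (f : E → S) :
    ∑ e, f e = f e₀ + ∑ e : {e : E // e ≠ e₀}, f e.1 := by
  have h1 : ∑ e ∈ univ.filter (fun e => e ≠ e₀), f e
      = ∑ e : {e : E // e ≠ e₀}, f e.1 :=
    Finset.sum_subtype _ (by simp) f
  rw [← h1, Finset.filter_ne', Finset.add_sum_erase _ f (mem_univ e₀)]

private lemma ite_or_disjoint {P Q : Prop} [Decidable P] [Decidable Q]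
    (h : ¬(P ∧ Q)) (a b : S) :
    (if P ∨ Q then (if P then a else b) else 0)
      = (if P then a else 0) + (if Q then b else 0) := by
  split_ifs <;> simp_all

private lemma sum_comp_ite {α β E : Type} [Fintype E] [Fintype α] [DecidableEq α]
    [DecidableEq β] (κ : α → β) (f : E → α) (a : E → S) (p : β) :
    ∑ e, (if κ (f e) = p then a e else 0)
      = ∑ w, (if κ w = p then (∑ e, if f e = w then a e else 0) else 0) := by
  calc ∑ e, (if κ (f e) = p then a e else 0)
      = ∑ e, ∑ w, (if f e = w then (if κ w = p then a e else 0) else 0) := by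
        refine Finset.sum_congr rfl fun e _ => ?_
        rw [Finset.sum_ite_eq]; simp
    _ = ∑ w, ∑ e, (if f e = w then (if κ w = p then a e else 0) else 0) := Finset.sum_comm
    _ = ∑ w, (if κ w = p then (∑ e, if f e = w then a e else 0) else 0) := by
        refine Finset.sum_congr rfl fun w _ => ?_; split_ifs <;> simp

lemma glue_eq_inl {V₁ E₁ V₂ : Type} [DecidableEq V₂] (Γ₁ : Multigraph V₁ E₁) (e₀ : E₁)
    {u₂ v₂ : V₂} (huv : u₂ ≠ v₂) (y : V₂) (x : V₁) :
    glue Γ₁ e₀ u₂ v₂ y = Sum.inl x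
      ↔ ((y = u₂ ∧ x = Γ₁.fst e₀) ∨ (y = v₂ ∧ x = Γ₁.snd e₀)) := by
  unfold glue
  split_ifs with h h' <;> simp_all [eq_comm]

lemma glue_eq_inr {V₁ E₁ V₂ : Type} [DecidableEq V₂] (Γ₁ : Multigraph V₁ E₁) (e₀ : E₁)
    {u₂ v₂ : V₂} (y w : V₂) (hw : w ≠ u₂ ∧ w ≠ v₂) :
    glue Γ₁ e₀ u₂ v₂ y = Sum.inr ⟨w, hw⟩ ↔ y = w := by
  unfold glue
  split_ifs with h h'
  · constructor
    · intro hc; simp at hc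
    · intro hc; subst hc; exact absurd h hw.1
  · constructor
    · intro hc; simp at hc
    · intro hc; subst hc; exact absurd h' hw.2
  · simp

private lemma sum_glue_inl {V₁ E₁ V₂ : Type} [Fintype V₂] [DecidableEq V₁] [DecidableEq V₂]
    (Γ₁ : Multigraph V₁ E₁) (e₀ : E₁) {u₂ v₂ : V₂} (huv : u₂ ≠ v₂) (c : V₂ → S) (x : V₁) :
    ∑ w, (if glue Γ₁ e₀ u₂ v₂ w = Sum.inl x then c w else 0)
      = (if x = Γ₁.fst e₀ then c u₂ else 0) + (if x = Γ₁.snd e₀ then c v₂ else 0) := by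
  have key : ∀ w : V₂, (if glue Γ₁ e₀ u₂ v₂ w = Sum.inl x then c w else 0)
      = (if w = u₂ ∧ x = Γ₁.fst e₀ then c w else 0)
        + (if w = v₂ ∧ x = Γ₁.snd e₀ then c w else 0) := by
    intro w
    rw [show (if glue Γ₁ e₀ u₂ v₂ w = Sum.inl x then c w else 0)
        = (if ((w = u₂ ∧ x = Γ₁.fst e₀) ∨ (w = v₂ ∧ x = Γ₁.snd e₀)) then c w else 0) by
      simp only [glue_eq_inl Γ₁ e₀ huv]]
    have hd : ¬((w = u₂ ∧ x = Γ₁.fst e₀) ∧ (w = v₂ ∧ x = Γ₁.snd e₀)) := by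
      rintro ⟨⟨rfl, -⟩, ⟨rfl, -⟩⟩; exact huv rfl
    rw [show (if ((w = u₂ ∧ x = Γ₁.fst e₀) ∨ (w = v₂ ∧ x = Γ₁.snd e₀)) then c w else 0)
        = (if ((w = u₂ ∧ x = Γ₁.fst e₀) ∨ (w = v₂ ∧ x = Γ₁.snd e₀)) then
            (if (w = u₂ ∧ x = Γ₁.fst e₀) then c w else c w) else 0) by simp]
    exact ite_or_disjoint hd _ _
  rw [Finset.sum_congr rfl fun w _ => key w, Finset.sum_add_distrib]
  congr 1
  · rw [Finset.sum_congr rfl fun w _ => ite_and (w = u₂) (x = Γ₁.fst e₀) (c w) 0,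
      Finset.sum_ite_eq' univ u₂ (fun w => if x = Γ₁.fst e₀ then c w else 0)]
    simp
  · rw [Finset.sum_congr rfl fun w _ => ite_and (w = v₂) (x = Γ₁.snd e₀) (c w) 0,
      Finset.sum_ite_eq' univ v₂ (fun w => if x = Γ₁.snd e₀ then c w else 0)]
    simp

private lemma sum_glue_inr {V₁ E₁ V₂ : Type} [Fintype V₂] [DecidableEq V₁] [DecidableEq V₂]
    (Γ₁ : Multigraph V₁ E₁) (e₀ : E₁) {u₂ v₂ : V₂} (c : V₂ → S)
    (w₀ : V₂) (hw : w₀ ≠ u₂ ∧ w₀ ≠ v₂) :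
    ∑ w, (if glue Γ₁ e₀ u₂ v₂ w = Sum.inr ⟨w₀, hw⟩ then c w else 0) = c w₀ := by
  rw [Finset.sum_congr rfl fun w _ => show
      (if glue Γ₁ e₀ u₂ v₂ w = Sum.inr ⟨w₀, hw⟩ then c w else 0)
        = (if w = w₀ then c w else 0) by simp only [glue_eq_inr Γ₁ e₀ w w₀ hw],
    Finset.sum_ite_eq' univ w₀ c]
  simp

private lemma inl_ite_red {V₁ W : Type} [DecidableEq V₁] [DecidableEq W] (a x : V₁) (s : S) :
    (if (Sum.inl a : V₁ ⊕ W) = Sum.inl x then s else 0) = (if a = x then s else 0) := by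
  by_cases h : a = x <;> simp [h]

end TwoSumAux

/-- if `|S| ≥ 3` and neither `Γ₁` nor `Γ₂` is `S`-connected, then their
2-sum is not `S`-connected. -/
theorem twoSum_not_groupConnected {V₁ E₁ V₂ E₂ : Type}
    [Fintype V₁] [Fintype E₁] [DecidableEq V₁] [DecidableEq E₁]
    [Fintype V₂] [Fintype E₂] [DecidableEq V₂]
    (S : Type) [AddCommGroup S] [Fintype S] (hS : 3 ≤ Fintype.card S)
    (Γ₁ : Multigraph V₁ E₁) (e₀ : E₁) (Γ₂ : Multigraph V₂ E₂)
    (u₂ v₂ : V₂) (huv : u₂ ≠ v₂)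
    (h₁ : ¬ Γ₁.GroupConnected S) (h₂ : ¬ Γ₂.GroupConnected S) :
    ¬ (Γ₁.twoSum e₀ Γ₂ u₂ v₂ huv).GroupConnected S := by
  classical
  intro hGC
  unfold Multigraph.GroupConnected at h₁ h₂ hGC
  push_neg at h₁ h₂
  obtain ⟨β₁, hs₁, hnr₁⟩ := h₁
  obtain ⟨β₂, hs₂, hnr₂⟩ := h₂
  have huv₁ : Γ₁.fst e₀ ≠ Γ₁.snd e₀ := Γ₁.loopless e₀
  set β : V₁ ⊕ {w : V₂ // w ≠ u₂ ∧ w ≠ v₂} → S :=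
    Sum.elim (fun x => β₁ x + ((if x = Γ₁.fst e₀ then β₂ u₂ else 0)
        + (if x = Γ₁.snd e₀ then β₂ v₂ else 0)))
      (fun w => β₂ w.1) with hβ
  have hsum : ∑ p, β p = 0 := by
    rw [Fintype.sum_sum_type]
    simp only [hβ, Sum.elim_inl, Sum.elim_inr]
    rw [Finset.sum_add_distrib, Finset.sum_add_distrib,
      Finset.sum_ite_eq' univ (Γ₁.fst e₀) (fun _ => β₂ u₂),
      Finset.sum_ite_eq' univ (Γ₁.snd e₀) (fun _ => β₂ v₂),
      sum_subtype_ne_ne huv β₂, hs₁, hs₂]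
    simp
  obtain ⟨o, φ, hφ, hb⟩ := hGC β hsum
  set o₂ : E₂ → Bool := fun e => o (Sum.inr e) with ho₂
  set φ₂ : E₂ → S := fun e => φ (Sum.inr e) with hφ₂
  -- Expansion of the boundary of the 2-sum
  have expand : ∀ p : V₁ ⊕ {w : V₂ // w ≠ u₂ ∧ w ≠ v₂},
      (Γ₁.twoSum e₀ Γ₂ u₂ v₂ huv).boundary o φ p
      = ((∑ e : {e : E₁ // e ≠ e₀},
            if (Sum.inl (if o (Sum.inl e) then Γ₁.snd e.1 else Γ₁.fst e.1)
                : V₁ ⊕ {w : V₂ // w ≠ u₂ ∧ w ≠ v₂}) = p then φ (Sum.inl e) else 0)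
          - ∑ e : {e : E₁ // e ≠ e₀},
            if (Sum.inl (if o (Sum.inl e) then Γ₁.fst e.1 else Γ₁.snd e.1)
                : V₁ ⊕ {w : V₂ // w ≠ u₂ ∧ w ≠ v₂}) = p then φ (Sum.inl e) else 0)
        + ∑ w : V₂, (if glue Γ₁ e₀ u₂ v₂ w = p then Γ₂.boundary o₂ φ₂ w else 0) := by
    intro p
    have hsplit : (∑ w : V₂, (if glue Γ₁ e₀ u₂ v₂ w = p then Γ₂.boundary o₂ φ₂ w else 0))
        = (∑ w : V₂, (if glue Γ₁ e₀ u₂ v₂ w = p then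
            (∑ e : E₂, if (if o₂ e then Γ₂.snd e else Γ₂.fst e) = w then φ₂ e else 0) else 0))
          - ∑ w : V₂, (if glue Γ₁ e₀ u₂ v₂ w = p then
            (∑ e : E₂, if (if o₂ e then Γ₂.fst e else Γ₂.snd e) = w then φ₂ e else 0) else 0) := by
      rw [← Finset.sum_sub_distrib]
      refine Finset.sum_congr rfl fun w _ => ?_
      unfold Multigraph.boundary Multigraph.tail Multigraph.head
      split_ifs <;> simp
    rw [hsplit]
    unfold Multigraph.boundary Multigraph.tail Multigraph.head Multigraph.twoSum
    rw [Fintype.sum_sum_type, Fintype.sum_sum_type]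
    simp only [Sum.elim_inl, Sum.elim_inr]
    have ht : ∀ e : E₂,
        (if (if o (Sum.inr e) then glue Γ₁ e₀ u₂ v₂ (Γ₂.snd e)
              else glue Γ₁ e₀ u₂ v₂ (Γ₂.fst e)) = p then φ (Sum.inr e) else 0)
        = (if glue Γ₁ e₀ u₂ v₂ (if o₂ e then Γ₂.snd e else Γ₂.fst e) = p
            then φ₂ e else 0) := by
      intro e
      rw [← apply_ite (glue Γ₁ e₀ u₂ v₂)]
    have hh : ∀ e : E₂,
        (if (if o (Sum.inr e) then glue Γ₁ e₀ u₂ v₂ (Γ₂.fst e)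
              else glue Γ₁ e₀ u₂ v₂ (Γ₂.snd e)) = p then φ (Sum.inr e) else 0)
        = (if glue Γ₁ e₀ u₂ v₂ (if o₂ e then Γ₂.fst e else Γ₂.snd e) = p
            then φ₂ e else 0) := by
      intro e
      rw [← apply_ite (glue Γ₁ e₀ u₂ v₂)]
    have ht1 : ∀ e : {e : E₁ // e ≠ e₀},
        (if (if o (Sum.inl e) then (Sum.inl (Γ₁.snd e.1) : V₁ ⊕ {w : V₂ // w ≠ u₂ ∧ w ≠ v₂})
              else Sum.inl (Γ₁.fst e.1)) = p then φ (Sum.inl e) else 0)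
        = (if (Sum.inl (if o (Sum.inl e) then Γ₁.snd e.1 else Γ₁.fst e.1)
            : V₁ ⊕ {w : V₂ // w ≠ u₂ ∧ w ≠ v₂}) = p then φ (Sum.inl e) else 0) := by
      intro e
      rw [← apply_ite (Sum.inl : V₁ → V₁ ⊕ {w : V₂ // w ≠ u₂ ∧ w ≠ v₂})]
    have hh1 : ∀ e : {e : E₁ // e ≠ e₀},
        (if (if o (Sum.inl e) then (Sum.inl (Γ₁.fst e.1) : V₁ ⊕ {w : V₂ // w ≠ u₂ ∧ w ≠ v₂})
              else Sum.inl (Γ₁.snd e.1)) = p then φ (Sum.inl e) else 0)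
        = (if (Sum.inl (if o (Sum.inl e) then Γ₁.fst e.1 else Γ₁.snd e.1)
            : V₁ ⊕ {w : V₂ // w ≠ u₂ ∧ w ≠ v₂}) = p then φ (Sum.inl e) else 0) := by
      intro e
      rw [← apply_ite (Sum.inl : V₁ → V₁ ⊕ {w : V₂ // w ≠ u₂ ∧ w ≠ v₂})]
    erw [Finset.sum_congr rfl fun e _ => ht e, Finset.sum_congr rfl fun e _ => hh e,
      Finset.sum_congr rfl fun e _ => ht1 e, Finset.sum_congr rfl fun e _ => hh1 e,
      sum_comp_ite (glue Γ₁ e₀ u₂ v₂) (fun e => if o₂ e then Γ₂.snd e else Γ₂.fst e) φ₂ p,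
      sum_comp_ite (glue Γ₁ e₀ u₂ v₂) (fun e => if o₂ e then Γ₂.fst e else Γ₂.snd e) φ₂ p]
    abel
  -- The boundary on the Γ₂ side, away from u₂ v₂, matches β₂
  have hbd2 : ∀ (w : V₂) (hw : w ≠ u₂ ∧ w ≠ v₂), Γ₂.boundary o₂ φ₂ w = β₂ w := by
    intro w hw
    have h := hb (Sum.inr ⟨w, hw⟩)
    rw [expand (Sum.inr ⟨w, hw⟩)] at h
    simp only [hβ, Sum.elim_inr] at h
    rw [show (∑ e : {e : E₁ // e ≠ e₀},
          if (Sum.inl (if o (Sum.inl e) then Γ₁.snd e.1 else Γ₁.fst e.1)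
              : V₁ ⊕ {w : V₂ // w ≠ u₂ ∧ w ≠ v₂}) = Sum.inr ⟨w, hw⟩
            then φ (Sum.inl e) else 0) = 0 from Finset.sum_eq_zero fun e _ => by simp,
      show (∑ e : {e : E₁ // e ≠ e₀},
          if (Sum.inl (if o (Sum.inl e) then Γ₁.fst e.1 else Γ₁.snd e.1)
              : V₁ ⊕ {w : V₂ // w ≠ u₂ ∧ w ≠ v₂}) = Sum.inr ⟨w, hw⟩
            then φ (Sum.inl e) else 0) = 0 from Finset.sum_eq_zero fun e _ => by simp,
      sum_glue_inr Γ₁ e₀ (Γ₂.boundary o₂ φ₂) w hw] at h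
    simpa using h
  set t : S := Γ₂.boundary o₂ φ₂ u₂ - β₂ u₂ with ht
  have hbu : Γ₂.boundary o₂ φ₂ u₂ = β₂ u₂ + t := by rw [ht]; abel
  have hbv : Γ₂.boundary o₂ φ₂ v₂ = β₂ v₂ - t := by
    have h1 : Γ₂.boundary o₂ φ₂ u₂ + Γ₂.boundary o₂ φ₂ v₂
        + ∑ w : {w : V₂ // w ≠ u₂ ∧ w ≠ v₂}, Γ₂.boundary o₂ φ₂ w.1 = 0 := by
      rw [sum_subtype_ne_ne huv (Γ₂.boundary o₂ φ₂), Γ₂.sum_boundary o₂ φ₂]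
      abel
    have h2 : β₂ u₂ + β₂ v₂ + ∑ w : {w : V₂ // w ≠ u₂ ∧ w ≠ v₂}, β₂ w.1 = 0 := by
      rw [sum_subtype_ne_ne huv β₂, hs₂]; abel
    have h3 : ∑ w : {w : V₂ // w ≠ u₂ ∧ w ≠ v₂}, Γ₂.boundary o₂ φ₂ w.1
        = ∑ w : {w : V₂ // w ≠ u₂ ∧ w ≠ v₂}, β₂ w.1 :=
      Finset.sum_congr rfl fun w _ => hbd2 w.1 w.2
    rw [h3] at h1
    have h4 : Γ₂.boundary o₂ φ₂ u₂ + Γ₂.boundary o₂ φ₂ v₂ = β₂ u₂ + β₂ v₂ :=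
      add_right_cancel (h1.trans h2.symm)
    have h6 : Γ₂.boundary o₂ φ₂ v₂ = β₂ u₂ + β₂ v₂ - Γ₂.boundary o₂ φ₂ u₂ := by
      rw [← h4]; abel
    rw [h6, ht]; abel
  -- the E₁-side sums, reduced to plain (non-`Sum.inl`) form
  have hD : ∀ x : V₁,
      ((∑ e : {e : E₁ // e ≠ e₀},
          if (if o (Sum.inl e) then Γ₁.snd e.1 else Γ₁.fst e.1) = x then φ (Sum.inl e) else 0)
        - ∑ e : {e : E₁ // e ≠ e₀},
          if (if o (Sum.inl e) then Γ₁.fst e.1 else Γ₁.snd e.1) = x then φ (Sum.inl e) else 0)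
      = β₁ x - (if x = Γ₁.fst e₀ then t else 0) + (if x = Γ₁.snd e₀ then t else 0) := by
    intro x
    have h := hb (Sum.inl x)
    rw [expand (Sum.inl x)] at h
    simp only [hβ, Sum.elim_inl] at h
    rw [sum_glue_inl Γ₁ e₀ huv (Γ₂.boundary o₂ φ₂) x, hbu, hbv,
      Finset.sum_congr rfl fun (e : {e : E₁ // e ≠ e₀}) _ =>
        inl_ite_red (W := {w : V₂ // w ≠ u₂ ∧ w ≠ v₂})
          (if o (Sum.inl e) then Γ₁.snd e.1 else Γ₁.fst e.1) x (φ (Sum.inl e)),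
      Finset.sum_congr rfl fun (e : {e : E₁ // e ≠ e₀}) _ =>
        inl_ite_red (W := {w : V₂ // w ≠ u₂ ∧ w ≠ v₂})
          (if o (Sum.inl e) then Γ₁.fst e.1 else Γ₁.snd e.1) x (φ (Sum.inl e))] at h
    rw [eq_sub_of_add_eq h]
    split_ifs <;> abel
  by_cases hts : t = 0
  · -- Γ₂ itself realizes β₂, contradiction
    obtain ⟨u, hu⟩ := hnr₂ o₂ φ₂ (fun e => hφ (Sum.inr e))
    apply hu
    by_cases hu1 : u = u₂
    · rw [hu1, hbu, hts, add_zero]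
    by_cases hu2 : u = v₂
    · rw [hu2, hbv, hts, sub_zero]
    · exact hbd2 u ⟨hu1, hu2⟩
  · -- Γ₁ realizes β₁ using the edge e₀ with value t, contradiction
    set o' : E₁ → Bool := fun e => if h : e = e₀ then false else o (Sum.inl ⟨e, h⟩) with ho'
    set φ' : E₁ → S := fun e => if h : e = e₀ then t else φ (Sum.inl ⟨e, h⟩) with hφ'
    have hnz : ∀ e : E₁, φ' e ≠ 0 := by
      intro e
      by_cases h : e = e₀
      · rw [hφ']; simpa [h] using hts
      · rw [hφ']; simpa [h] using hφ (Sum.inl ⟨e, h⟩)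
    obtain ⟨x, hx⟩ := hnr₁ o' φ' hnz
    apply hx
    have ho'e : o' e₀ = false := by rw [ho']; simp
    have hφ'e : φ' e₀ = t := by rw [hφ']; simp
    have hsub : ∀ e : {e : E₁ // e ≠ e₀},
        (if (if o' e.1 then Γ₁.snd e.1 else Γ₁.fst e.1) = x then φ' e.1 else 0)
        = (if (if o (Sum.inl e) then Γ₁.snd e.1 else Γ₁.fst e.1) = x
            then φ (Sum.inl e) else 0) := by
      intro e
      rw [show o' e.1 = o (Sum.inl e) by rw [ho']; simp [e.2],
        show φ' e.1 = φ (Sum.inl e) by rw [hφ']; simp [e.2]]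
    have hsub' : ∀ e : {e : E₁ // e ≠ e₀},
        (if (if o' e.1 then Γ₁.fst e.1 else Γ₁.snd e.1) = x then φ' e.1 else 0)
        = (if (if o (Sum.inl e) then Γ₁.fst e.1 else Γ₁.snd e.1) = x
            then φ (Sum.inl e) else 0) := by
      intro e
      rw [show o' e.1 = o (Sum.inl e) by rw [ho']; simp [e.2],
        show φ' e.1 = φ (Sum.inl e) by rw [hφ']; simp [e.2]]
    have hbd1 : Γ₁.boundary o' φ' x
        = ((if Γ₁.fst e₀ = x then t else 0) - (if Γ₁.snd e₀ = x then t else 0))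
          + ((∑ e : {e : E₁ // e ≠ e₀},
              if (if o (Sum.inl e) then Γ₁.snd e.1 else Γ₁.fst e.1) = x
                then φ (Sum.inl e) else 0)
            - ∑ e : {e : E₁ // e ≠ e₀},
              if (if o (Sum.inl e) then Γ₁.fst e.1 else Γ₁.snd e.1) = x
                then φ (Sum.inl e) else 0) := by
      unfold Multigraph.boundary Multigraph.tail Multigraph.head
      rw [sum_split_e0 e₀
          (fun e => if (if o' e then Γ₁.snd e else Γ₁.fst e) = x then φ' e else 0),
        sum_split_e0 e₀
          (fun e => if (if o' e then Γ₁.fst e else Γ₁.snd e) = x then φ' e else 0)]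
      simp only [ho'e, hφ'e, Bool.false_eq_true, if_false]
      rw [Finset.sum_congr rfl fun e _ => hsub e, Finset.sum_congr rfl fun e _ => hsub' e]
      abel
    rw [hbd1, hD x]
    simp only [show (Γ₁.fst e₀ = x) ↔ (x = Γ₁.fst e₀) from eq_comm,
      show (Γ₁.snd e₀ = x) ↔ (x = Γ₁.snd e₀) from eq_comm]
    split_ifs <;> abel
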